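/- Assume the support of μ has nonempty intersection with [0, 2/3). Then for every ε > 0 and every x ∈ int(G₁) there exists N ∈ ℕ such that P(d(φ_N(x,·), C) < ε) > 0, where d is the Euclidean distance on ℝ³. (Lemma 2.3, first part.) -/

import Mathlib

open MeasureTheory ProbabilityTheory Filter Topology
open scoped ENNReal

noncomputable section

/-- The cubic stochastic operator `V_θ`, regarded as a map on (Euclidean) `ℝ³`. -/
def Vcso (θ : ℝ) (x : EuclideanSpace ℝ (Fin 3)) : EuclideanSpace ℝ (Fin 3) :=
  WithLp.toLp 2 ![x 0 * ((x 0)^2 + 3*θ*(x 0)*(x 1 + x 2) + 3*(1-θ)*((x 1)^2 + (x 2)^2) + 2*(x 1)*(x 2)),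
    x 1 * ((x 1)^2 + 3*θ*(x 1)*(x 2 + x 0) + 3*(1-θ)*((x 2)^2 + (x 0)^2) + 2*(x 2)*(x 0)),
    x 2 * ((x 2)^2 + 3*θ*(x 2)*(x 0 + x 1) + 3*(1-θ)*((x 0)^2 + (x 1)^2) + 2*(x 0)*(x 1))]

/-- The simplex `Δ² = {x ∈ ℝ³ : x₁,x₂,x₃ ≥ 0, x₁+x₂+x₃ = 1}`. -/
def simplex2 : Set (EuclideanSpace ℝ (Fin 3)) :=
  {x | 0 ≤ x 0 ∧ 0 ≤ x 1 ∧ 0 ≤ x 2 ∧ x 0 + x 1 + x 2 = 1}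

/-- The random orbit `φ_n(x) = V_{θ_n} ∘ ⋯ ∘ V_{θ_1}(x)` driven by the sequence
`θ_1, θ_2, … = θs 0, θs 1, …`. -/
def phiRDS (θs : ℕ → ℝ) : ℕ → EuclideanSpace ℝ (Fin 3) → EuclideanSpace ℝ (Fin 3)
  | 0, x => x
  | n+1, x => Vcso (θs n) (phiRDS θs n x)

/-- The vertex `e₁ = (1,0,0)`. -/
def e1 : EuclideanSpace ℝ (Fin 3) := WithLp.toLp 2 ![1, 0, 0]

/-- The vertex `c = (1/2,1/2,0)`. -/
def cpt : EuclideanSpace ℝ (Fin 3) := WithLp.toLp 2 ![1/2, 1/2, 0]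

/-- The vertex `C = (1/3,1/3,1/3)`. -/
def Cpt : EuclideanSpace ℝ (Fin 3) := WithLp.toLp 2 ![1/3, 1/3, 1/3]

/-- `G₁ = {y ∈ Δ² : y₁ ≥ y₂ ≥ y₃}`. -/
def G1 : Set (EuclideanSpace ℝ (Fin 3)) :=
  {y ∈ simplex2 | y 0 ≥ y 1 ∧ y 1 ≥ y 2}

/-- The interior of `G₁`: `{y ∈ Δ² : y₁ > y₂ > y₃ > 0}`. -/
def intG1 : Set (EuclideanSpace ℝ (Fin 3)) :=
  {y ∈ simplex2 | y 0 > y 1 ∧ y 1 > y 2 ∧ y 2 > 0}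

/-- The edge `M₁₂ = {y ∈ Δ² : y₁ = y₂ ≥ y₃}`. -/
def M12 : Set (EuclideanSpace ℝ (Fin 3)) :=
  {y ∈ simplex2 | y 0 = y 1 ∧ y 1 ≥ y 2}

/-- The edge `M₂₃ = {y ∈ Δ² : y₁ ≥ y₂ = y₃}`. -/
def M23 : Set (EuclideanSpace ℝ (Fin 3)) :=
  {y ∈ simplex2 | y 0 ≥ y 1 ∧ y 1 = y 2}

/-- The edge `Γ₁₂ = {y ∈ Δ² : y₁ ≥ y₂, y₃ = 0}`. -/
def Gamma12 : Set (EuclideanSpace ℝ (Fin 3)) :=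
  {y ∈ simplex2 | y 0 ≥ y 1 ∧ y 2 = 0}

/-- The seven fixed points `𝒜`. -/
def fixedA : Set (EuclideanSpace ℝ (Fin 3)) :=
  {WithLp.toLp 2 (![1,0,0] : Fin 3 → ℝ), WithLp.toLp 2 (![0,1,0] : Fin 3 → ℝ), WithLp.toLp 2 (![0,0,1] : Fin 3 → ℝ),
    WithLp.toLp 2 (![1/2,1/2,0] : Fin 3 → ℝ), WithLp.toLp 2 (![1/2,0,1/2] : Fin 3 → ℝ),
    WithLp.toLp 2 (![0,1/2,1/2] : Fin 3 → ℝ), WithLp.toLp 2 (![1/3,1/3,1/3] : Fin 3 → ℝ)}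

/-- Positive part of `log t`, valued in `ℝ≥0∞`. -/
def logPos (t : ℝ) : ℝ≥0∞ := ENNReal.ofReal (Real.log t)

/-- Negative part of the extended logarithm (with `log 0 = -∞`), valued in `ℝ≥0∞`. -/
def logNeg (t : ℝ) : ℝ≥0∞ := if t ≤ 0 then ⊤ else ENNReal.ofReal (-Real.log t)

/-- `E log g(Θ) < 0` in the extended sense (the value `-∞` is allowed), where `Θ` has law `μ`:
the positive part of the extended expectation is strictly smaller than the negative part. -/
def expLogNeg (μ : Measure ℝ) (g : ℝ → ℝ) : Prop :=
  ∫⁻ θ, logPos (g θ) ∂μ < ∫⁻ θ, logNeg (g θ) ∂μ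

/-- `E log g(Θ) ≤ r` in the extended sense (the value `-∞` is allowed), where `Θ` has law `μ`. -/
def expLogLe (μ : Measure ℝ) (g : ℝ → ℝ) (r : ℝ) : Prop :=
  ∫⁻ θ, logPos (g θ) ∂μ + ENNReal.ofReal (-r) ≤ ∫⁻ θ, logNeg (g θ) ∂μ + ENNReal.ofReal r

/-- The topological support of a measure on `ℝ`: points all of whose open neighborhoods
have positive measure. -/
def measSupport (μ : Measure ℝ) : Set ℝ :=
  {t : ℝ | ∀ U : Set ℝ, IsOpen U → t ∈ U → 0 < μ U}

/-! ### Auxiliary lemmas -/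

lemma brkt_nonneg (θ a b c : ℝ) (h0 : 0 ≤ θ) (h1 : θ ≤ 1) (ha : 0 ≤ a) (hb : 0 ≤ b) (hc : 0 ≤ c) :
    0 ≤ a^2 + 3*θ*a*(b+c) + 3*(1-θ)*(b^2+c^2) + 2*b*c := by
  nlinarith [mul_nonneg (mul_nonneg h0 ha) (add_nonneg hb hc),
    mul_nonneg (by linarith : (0:ℝ) ≤ 1-θ) (by positivity : (0:ℝ) ≤ b^2+c^2),
    mul_nonneg hb hc, sq_nonneg a]

lemma order_pres (θ a b c : ℝ) (h0 : 0 ≤ θ) (h1 : θ ≤ 1) (ha : 0 ≤ a) (hb : 0 ≤ b) (hc : 0 ≤ c)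
    (hab : b ≤ a) :
    b * (b^2 + 3*θ*b*(c+a) + 3*(1-θ)*(c^2+a^2) + 2*c*a)
      ≤ a * (a^2 + 3*θ*a*(b+c) + 3*(1-θ)*(b^2+c^2) + 2*b*c) := by
  have key : a * (a^2 + 3*θ*a*(b+c) + 3*(1-θ)*(b^2+c^2) + 2*b*c)
      - b * (b^2 + 3*θ*b*(c+a) + 3*(1-θ)*(c^2+a^2) + 2*c*a)
      = (a-b) * ((a-b)^2 + 6*θ*a*b + 3*θ*c*(a+b) + 3*(1-θ)*c^2) := by ring
  have hQ : 0 ≤ (a-b)^2 + 6*θ*a*b + 3*θ*c*(a+b) + 3*(1-θ)*c^2 := by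
    nlinarith [sq_nonneg (a-b), mul_nonneg (mul_nonneg h0 ha) hb,
      mul_nonneg (mul_nonneg h0 hc) (add_nonneg ha hb),
      mul_nonneg (by linarith : (0:ℝ) ≤ 1-θ) (sq_nonneg c)]
  nlinarith [mul_nonneg (by linarith : (0:ℝ) ≤ a - b) hQ]

lemma brkt_ge (θ a b c : ℝ) (hθ : θ < 2/3) (hsum : a + b + c = 1) :
    1 + (2-3*θ)*(1/3-c) ≤ c^2 + 3*θ*c*(a+b) + 3*(1-θ)*(a^2+b^2) + 2*a*b := by
  have ha : a = 1 - b - c := by linarith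
  subst ha
  nlinarith [mul_nonneg (by linarith : (0:ℝ) ≤ 2-3*θ) (sq_nonneg (1-2*b-c)),
    mul_nonneg (by linarith : (0:ℝ) ≤ 2-3*θ) (sq_nonneg (1/3-c))]

lemma Vcso_coord (θ : ℝ) (x : EuclideanSpace ℝ (Fin 3)) :
    (Vcso θ x) 0 = x 0 * ((x 0)^2 + 3*θ*(x 0)*(x 1 + x 2) + 3*(1-θ)*((x 1)^2 + (x 2)^2) + 2*(x 1)*(x 2))
    ∧ (Vcso θ x) 1 = x 1 * ((x 1)^2 + 3*θ*(x 1)*(x 2 + x 0) + 3*(1-θ)*((x 2)^2 + (x 0)^2) + 2*(x 2)*(x 0))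
    ∧ (Vcso θ x) 2 = x 2 * ((x 2)^2 + 3*θ*(x 2)*(x 0 + x 1) + 3*(1-θ)*((x 0)^2 + (x 1)^2) + 2*(x 0)*(x 1)) := by
  refine ⟨?_, ?_, ?_⟩ <;> simp [Vcso]

lemma mem_G1_iff (y : EuclideanSpace ℝ (Fin 3)) :
    y ∈ G1 ↔ (0 ≤ y 0 ∧ 0 ≤ y 1 ∧ 0 ≤ y 2 ∧ y 0 + y 1 + y 2 = 1) ∧ y 1 ≤ y 0 ∧ y 2 ≤ y 1 := by
  simp [G1, simplex2, Set.mem_setOf_eq, ge_iff_le]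

lemma mem_intG1_iff (y : EuclideanSpace ℝ (Fin 3)) :
    y ∈ intG1 ↔ (0 ≤ y 0 ∧ 0 ≤ y 1 ∧ 0 ≤ y 2 ∧ y 0 + y 1 + y 2 = 1) ∧ y 1 < y 0 ∧ y 2 < y 1 ∧ 0 < y 2 := by
  simp [intG1, simplex2, Set.mem_setOf_eq]

lemma Vcso_mem_G1 {θ : ℝ} (h0 : 0 ≤ θ) (h1 : θ ≤ 1) {x : EuclideanSpace ℝ (Fin 3)}
    (hx : x ∈ G1) : Vcso θ x ∈ G1 := by
  rw [mem_G1_iff] at hx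
  obtain ⟨⟨ha, hb, hc, hsum⟩, hab, hbc⟩ := hx
  obtain ⟨e0, e1, e2⟩ := Vcso_coord θ x
  rw [mem_G1_iff, e0, e1, e2]
  refine ⟨⟨?_, ?_, ?_, ?_⟩, ?_, ?_⟩
  · exact mul_nonneg ha (brkt_nonneg θ (x 0) (x 1) (x 2) h0 h1 ha hb hc)
  · have := brkt_nonneg θ (x 1) (x 2) (x 0) h0 h1 hb hc ha
    nlinarith [this, hb]
  · have := brkt_nonneg θ (x 2) (x 0) (x 1) h0 h1 hc ha hb
    nlinarith [this, hc]
  · linear_combination ((x 0 + x 1 + x 2)^2 + (x 0 + x 1 + x 2) + 1) * hsum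
  · exact order_pres θ (x 0) (x 1) (x 2) h0 h1 ha hb hc hab
  · have := order_pres θ (x 1) (x 2) (x 0) h0 h1 hb hc ha hbc
    nlinarith [this]

lemma G1_third_le {x : EuclideanSpace ℝ (Fin 3)} (hx : x ∈ G1) : x 2 ≤ 1/3 := by
  rw [mem_G1_iff] at hx; obtain ⟨⟨_,_,_,hsum⟩, hab, hbc⟩ := hx; linarith

lemma Vcso_grow {θ : ℝ} (hθ : θ < 2/3) {x : EuclideanSpace ℝ (Fin 3)} (hx : x ∈ G1) :
    x 2 * (1 + (2-3*θ)*(1/3 - x 2)) ≤ (Vcso θ x) 2 := by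
  rw [mem_G1_iff] at hx
  obtain ⟨⟨ha, hb, hc, hsum⟩, hab, hbc⟩ := hx
  rw [(Vcso_coord θ x).2.2]
  have h := brkt_ge θ (x 0) (x 1) (x 2) hθ hsum
  calc x 2 * (1 + (2-3*θ)*(1/3 - x 2))
      ≤ x 2 * ((x 2)^2 + 3*θ*(x 2)*(x 0+x 1) + 3*(1-θ)*((x 0)^2+(x 1)^2) + 2*(x 0)*(x 1)) := by
        apply mul_le_mul_of_nonneg_left _ hc; linarith
    _ = _ := by ring_nf

lemma Vcso_cont : Continuous fun p : ℝ × EuclideanSpace ℝ (Fin 3) => Vcso p.1 p.2 := by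
  have h0 : Continuous fun p : ℝ × EuclideanSpace ℝ (Fin 3) => p.2 0 :=
    (EuclideanSpace.proj (0 : Fin 3)).continuous.comp continuous_snd
  have h1 : Continuous fun p : ℝ × EuclideanSpace ℝ (Fin 3) => p.2 1 :=
    (EuclideanSpace.proj (1 : Fin 3)).continuous.comp continuous_snd
  have h2 : Continuous fun p : ℝ × EuclideanSpace ℝ (Fin 3) => p.2 2 :=
    (EuclideanSpace.proj (2 : Fin 3)).continuous.comp continuous_snd
  have key : Continuous fun p : ℝ × EuclideanSpace ℝ (Fin 3) => (fun i => Vcso p.1 p.2 i : Fin 3 → ℝ) := by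
    apply continuous_pi
    intro i
    fin_cases i <;> simp [Vcso] <;> fun_prop
  exact (PiLp.continuous_toLp 2 (fun _ : Fin 3 => ℝ)).comp key

lemma phi_cont (x : EuclideanSpace ℝ (Fin 3)) (N : ℕ) :
    Continuous fun θs : ℕ → ℝ => phiRDS θs N x := by
  induction N with
  | zero => exact continuous_const
  | succ n ih => exact Vcso_cont.comp ((continuous_apply n).prodMk ih)

set_option maxHeartbeats 1000000 in
lemma reach_det {θ : ℝ} (h0 : 0 ≤ θ) (hθ : θ < 2/3) {x : EuclideanSpace ℝ (Fin 3)}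
    (hx : x ∈ intG1) {ε : ℝ} (hε : 0 < ε) :
    ∃ N, dist (phiRDS (fun _ => θ) N x) Cpt < ε := by
  have h1 : θ ≤ 1 := by linarith
  rw [mem_intG1_iff] at hx
  obtain ⟨⟨hxa, hxb, hxc, hxsum⟩, hxab, hxbc, hxcpos⟩ := hx
  set y : ℕ → EuclideanSpace ℝ (Fin 3) := fun n => phiRDS (fun _ => θ) n x with hy
  have hxG1 : x ∈ G1 := by
    rw [mem_G1_iff]; exact ⟨⟨hxa, hxb, hxc, hxsum⟩, le_of_lt hxab, le_of_lt hxbc⟩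
  have hG : ∀ n, y n ∈ G1 := by
    intro n; induction n with
    | zero => exact hxG1
    | succ n ih => exact Vcso_mem_G1 h0 h1 ih
  have hmono : ∀ n, y n 2 ≤ y (n+1) 2 := by
    intro n
    have hg := Vcso_grow hθ (hG n)
    have hcle := G1_third_le (hG n)
    have hc : 0 ≤ y n 2 := ((mem_G1_iff _).mp (hG n)).1.2.2.1
    have : y n 2 ≤ y n 2 * (1 + (2-3*θ)*(1/3 - y n 2)) := by
      nlinarith [mul_nonneg hc (mul_nonneg (by linarith : (0:ℝ) ≤ 2-3*θ)
        (by linarith : (0:ℝ) ≤ 1/3 - y n 2))]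
    exact le_trans this hg
  have hpos : ∀ n, x 2 ≤ y n 2 := by
    intro n; induction n with
    | zero => exact le_refl _
    | succ n ih => exact le_trans ih (hmono n)
  set δ : ℝ := ε/4 with hδdef
  have hδ : 0 < δ := by positivity
  have key : ∃ N, 1/3 - y N 2 < δ := by
    by_contra hcon
    push_neg at hcon
    set q : ℝ := 1 + (2-3*θ)*δ with hq
    have hq1 : 1 < q := by nlinarith
    have hgeo : ∀ n, x 2 * q ^ n ≤ y n 2 := by
      intro n; induction n with
      | zero => simpa using hpos 0
      | succ n ih =>
        have hg := Vcso_grow hθ (hG n)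
        have hc : 0 ≤ y n 2 := le_trans (le_of_lt hxcpos) (hpos n)
        have h2 : δ ≤ 1/3 - y n 2 := hcon n
        have hstep : y n 2 * q ≤ y n 2 * (1 + (2-3*θ)*(1/3 - y n 2)) := by
          apply mul_le_mul_of_nonneg_left _ hc; nlinarith
        calc x 2 * q^(n+1) = (x 2 * q^n) * q := by ring
          _ ≤ y n 2 * q := mul_le_mul_of_nonneg_right ih (by linarith)
          _ ≤ y (n+1) 2 := le_trans hstep hg
    obtain ⟨n, hn⟩ := pow_unbounded_of_one_lt ((1/3) / (x 2)) hq1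
    have hge := hgeo n
    have hyle : y n 2 ≤ 1/3 := G1_third_le (hG n)
    rw [div_lt_iff₀ hxcpos] at hn
    nlinarith [hge, hn, hyle, hxcpos]
  obtain ⟨N, hN⟩ := key
  refine ⟨N, ?_⟩
  obtain ⟨⟨ha, hb, hc, hsum⟩, hab, hbc⟩ := (mem_G1_iff _).mp (hG N)
  have hcle : y N 2 ≤ 1/3 := G1_third_le (hG N)
  have ha13 : 1/3 ≤ y N 0 := by linarith
  have haup : y N 0 ≤ 1/3 + 2*(1/3 - y N 2) := by linarith
  have hbnd0 : |y N 0 - 1/3| ≤ 2*(1/3 - y N 2) := by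
    rw [abs_le]; constructor <;> linarith
  have hbnd1 : |y N 1 - 1/3| ≤ 2*(1/3 - y N 2) := by
    rw [abs_le]; constructor <;> linarith
  have hbnd2 : |y N 2 - 1/3| ≤ 1/3 - y N 2 := by
    rw [abs_le]; constructor <;> linarith
  have hdist : dist (y N) Cpt = Real.sqrt
      ((y N 0 - 1/3)^2 + (y N 1 - 1/3)^2 + (y N 2 - 1/3)^2) := by
    rw [EuclideanSpace.dist_eq]
    congr 1
    rw [Fin.sum_univ_three]
    simp [Cpt, Real.dist_eq, sq_abs]
  rw [hdist]
  rw [show ε = Real.sqrt (ε^2) by rw [Real.sqrt_sq hε.le]]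
  apply Real.sqrt_lt_sqrt (by positivity)
  have e0 : (y N 0 - 1/3)^2 ≤ (2*(1/3 - y N 2))^2 := by
    rw [← sq_abs (y N 0 - 1/3)]
    apply pow_le_pow_left₀ (abs_nonneg _) hbnd0
  have e1 : (y N 1 - 1/3)^2 ≤ (2*(1/3 - y N 2))^2 := by
    rw [← sq_abs (y N 1 - 1/3)]
    apply pow_le_pow_left₀ (abs_nonneg _) hbnd1
  have e2 : (y N 2 - 1/3)^2 ≤ (1/3 - y N 2)^2 := by
    rw [← sq_abs (y N 2 - 1/3)]
    apply pow_le_pow_left₀ (abs_nonneg _) hbnd2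
  have hd : 0 ≤ 1/3 - y N 2 := by linarith
  nlinarith [e0, e1, e2, hN, hδ, hd]

/-- Lemma 2.3, first part. -/
theorem reach_C_with_positive_probability (μ : Measure ℝ) [IsProbabilityMeasure μ] (hμ1 : μ (Set.Icc 0 1) = 1)
    (hsupp : (measSupport μ ∩ Set.Ico 0 (2/3)).Nonempty)
    {Ω : Type*} [MeasurableSpace Ω] (P : Measure Ω) [IsProbabilityMeasure P]
    (Θ : ℕ → Ω → ℝ) (hmeas : ∀ n, Measurable (Θ n))
    (hindep : iIndepFun Θ P)
    (hlaw : ∀ n, Measure.map (Θ n) P = μ) :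
    ∀ ε > (0:ℝ), ∀ x ∈ intG1, ∃ N : ℕ,
      0 < P {ω | dist (phiRDS (fun k => Θ k ω) N x) Cpt < ε} := by
  intro ε hε x hx
  obtain ⟨θ₀, hθsupp, hθ0, hθlt⟩ := hsupp
  obtain ⟨N, hN⟩ := reach_det hθ0 hθlt hx hε
  set U : Set (ℕ → ℝ) := {θs | dist (phiRDS θs N x) Cpt < ε} with hU
  have hUopen : IsOpen U := by
    have : U = (fun θs => phiRDS θs N x) ⁻¹' Metric.ball Cpt ε := by
      ext θs; simp [hU, Metric.mem_ball]
    rw [this]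
    exact (phi_cont x N).isOpen_preimage _ Metric.isOpen_ball
  have hmemU : (fun _ : ℕ => θ₀) ∈ U := hN
  obtain ⟨I, u, hu, hsub⟩ := isOpen_pi_iff.mp hUopen _ hmemU
  refine ⟨N, ?_⟩
  have hA : (⋂ i ∈ I, Θ i ⁻¹' u i) ⊆ {ω | dist (phiRDS (fun k => Θ k ω) N x) Cpt < ε} := by
    intro ω hω
    apply hsub
    intro i hi
    exact Set.mem_iInter₂.mp hω i hi
  refine lt_of_lt_of_le ?_ (measure_mono hA)
  have hprod := (iIndepFun_iff_measure_inter_preimage_eq_mul.mp hindep) I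
    (fun i hi => (hu i hi).1.measurableSet)
  rw [hprod, CanonicallyOrderedAdd.prod_pos]
  intro i hi
  have hPμ : P (Θ i ⁻¹' u i) = μ (u i) := by
    rw [← hlaw i, Measure.map_apply (hmeas i) (hu i hi).1.measurableSet]
  rw [hPμ]
  exact hθsupp (u i) (hu i hi).1 (hu i hi).2
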